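/- Reduction of the augmented dynamics to the damped harmonic oscillator on the physical limit: Fix m > 0, k, λ ∈ ℝ, and let F : ℝ⁴ → ℝ⁴ be F(q_a, q_b, π_a, π_b) = (π_a/m + (λ/2m)(q_a − q_b), −π_b/m − (λ/2m)(q_a − q_b), −(λ/2m)(π_a − π_b) − k q_a, (λ/2m)(π_a − π_b) + k q_b). Let z = (q_a, q_b, π_a, π_b) : [0,T] → ℝ⁴ be differentiable with z'(t) = F(z(t)) and z(0) in PL = {q_a = q_b, π_a = −π_b}. Then q_a'(t) = π_a(t)/m and π_a'(t) = −(λ/m) π_a(t) − k q_a(t) for all t ∈ [0,T]; equivalently, q_a is twice differentiable and satisfies the damped oscillator equation m q_a''(t) + λ q_a'(t) + k q_a(t) = 0. -/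

import Mathlib

noncomputable section

/-- The physical-limit subspace `PL = {(q_a, q_b, π_a, π_b) : q_a = q_b, π_a = −π_b}`. -/
def PLset : Set (ℝ × ℝ × ℝ × ℝ) := {z | z.1 = z.2.1 ∧ z.2.2.1 = -z.2.2.2}

/-- The Hamiltonian vector field of the augmented damped harmonic oscillator with mass `m`,
spring constant `k` and damping constant `lam`, in coordinates `(q_a, q_b, π_a, π_b)`. -/
def augF (m k lam : ℝ) (z : ℝ × ℝ × ℝ × ℝ) : ℝ × ℝ × ℝ × ℝ :=
  (z.2.2.1 / m + (lam / (2 * m)) * (z.1 - z.2.1),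
   -z.2.2.2 / m - (lam / (2 * m)) * (z.1 - z.2.1),
   -(lam / (2 * m)) * (z.2.2.1 - z.2.2.2) - k * z.1,
   (lam / (2 * m)) * (z.2.2.1 - z.2.2.2) + k * z.2.1)

private lemma hd_fst {z : ℝ → ℝ × ℝ × ℝ × ℝ} {F : ℝ × ℝ × ℝ × ℝ} {s : Set ℝ} {t : ℝ}
    (h : HasDerivWithinAt z F s t) : HasDerivWithinAt (fun s => (z s).1) F.1 s t := by
  simpa using h.hasFDerivWithinAt.fst.hasDerivWithinAt

private lemma hd_snd1 {z : ℝ → ℝ × ℝ × ℝ × ℝ} {F : ℝ × ℝ × ℝ × ℝ} {s : Set ℝ} {t : ℝ}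
    (h : HasDerivWithinAt z F s t) : HasDerivWithinAt (fun s => (z s).2.1) F.2.1 s t := by
  simpa using h.hasFDerivWithinAt.snd.fst.hasDerivWithinAt

private lemma hd_snd21 {z : ℝ → ℝ × ℝ × ℝ × ℝ} {F : ℝ × ℝ × ℝ × ℝ} {s : Set ℝ} {t : ℝ}
    (h : HasDerivWithinAt z F s t) : HasDerivWithinAt (fun s => (z s).2.2.1) F.2.2.1 s t := by
  simpa using h.hasFDerivWithinAt.snd.snd.fst.hasDerivWithinAt

private lemma hd_snd22 {z : ℝ → ℝ × ℝ × ℝ × ℝ} {F : ℝ × ℝ × ℝ × ℝ} {s : Set ℝ} {t : ℝ}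
    (h : HasDerivWithinAt z F s t) : HasDerivWithinAt (fun s => (z s).2.2.2) F.2.2.2 s t := by
  simpa using h.hasFDerivWithinAt.snd.snd.snd.hasDerivWithinAt

/-- **Reduction of the augmented dynamics to the damped harmonic oscillator on the physical
limit.** Along any solution of `z' = F(z)` starting in `PL`, the components `q_a = z.1` and
`π_a = z.2.2.1` satisfy `q_a' = π_a/m` and `π_a' = −(λ/m) π_a − k q_a`; equivalently, `q_a`
solves the damped oscillator equation `m q_a'' + λ q_a' + k q_a = 0`. -/
theorem augmented_dynamics_reduces_to_damped_oscillator
    (m k lam : ℝ) (hm : 0 < m) (T : ℝ) (hT : 0 ≤ T)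
    (z : ℝ → ℝ × ℝ × ℝ × ℝ)
    (hz : ∀ t ∈ Set.Icc (0:ℝ) T,
      HasDerivWithinAt z (augF m k lam (z t)) (Set.Icc 0 T) t)
    (h0 : z 0 ∈ PLset) :
    ∀ t ∈ Set.Icc (0:ℝ) T,
      HasDerivWithinAt (fun s => (z s).1) ((z t).2.2.1 / m) (Set.Icc 0 T) t ∧
      HasDerivWithinAt (fun s => (z s).2.2.1)
        (-(lam / m) * (z t).2.2.1 - k * (z t).1) (Set.Icc 0 T) t := by
  -- the "constraint" function, which satisfies a linear ODE with zero initial data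
  set u : ℝ → ℝ × ℝ := fun t => ((z t).1 - (z t).2.1, (z t).2.2.1 + (z t).2.2.2) with hu
  -- linear vector field
  set L : (ℝ × ℝ) →L[ℝ] (ℝ × ℝ) :=
    (((lam / m) • ContinuousLinearMap.fst ℝ ℝ ℝ + m⁻¹ • ContinuousLinearMap.snd ℝ ℝ ℝ).prod
      ((-k) • ContinuousLinearMap.fst ℝ ℝ ℝ)) with hL
  have hmne : m ≠ 0 := ne_of_gt hm
  have hu' : ∀ t ∈ Set.Ico (0:ℝ) T, HasDerivWithinAt u (L (u t)) (Set.Ici t) t := by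
    intro t ht
    have hmem : Set.Icc (0:ℝ) T ∈ nhdsWithin t (Set.Ici t) := Icc_mem_nhdsGE_of_mem ht
    have h := (hz t ⟨ht.1, le_of_lt ht.2⟩).mono_of_mem_nhdsWithin hmem
    have h1 := (hd_fst h).sub (hd_snd1 h)
    have h2 := (hd_snd21 h).add (hd_snd22 h)
    have := h1.prodMk h2
    convert this using 1
    · rfl
    simp only [hL, augF, ContinuousLinearMap.prod_apply, ContinuousLinearMap.add_apply,
      ContinuousLinearMap.smul_apply, ContinuousLinearMap.coe_fst', ContinuousLinearMap.coe_snd',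
      Prod.mk.injEq, smul_eq_mul]
    constructor <;> field_simp <;> ring
  have hucont : ContinuousOn u (Set.Icc 0 T) := by
    intro t ht
    exact ((hd_fst (hz t ht)).sub (hd_snd1 (hz t ht))).continuousWithinAt.prodMk
      ((hd_snd21 (hz t ht)).add (hd_snd22 (hz t ht))).continuousWithinAt
  have hzero : Set.EqOn u (fun _ => (0 : ℝ × ℝ)) (Set.Icc 0 T) := by
    apply ODE_solution_unique (v := fun _ p => L p) (K := ‖L‖₊)
      (fun _ => L.lipschitz) hucont hu' (continuousOn_const)
      (fun t _ => by simpa using (hasDerivWithinAt_const t _ (0 : ℝ × ℝ)))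
    simp only [hu]
    obtain ⟨h1, h2⟩ := h0
    rw [h1, h2]
    simp
  intro t ht
  have huz : u t = 0 := hzero ht
  have h1 : (z t).1 = (z t).2.1 := by
    have := congrArg Prod.fst huz; simpa [hu, sub_eq_zero] using this
  have h2 : (z t).2.2.2 = -(z t).2.2.1 := by
    have := congrArg Prod.snd huz; simp only [hu] at this
    linarith [congrArg Prod.snd huz, (show (z t).2.2.1 + (z t).2.2.2 = 0 by simpa [hu] using this)]
  constructor
  · have := hd_fst (hz t ht)
    simpa [augF, h1] using this
  · have := hd_snd21 (hz t ht)
    convert this using 1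
    simp only [augF, h2]
    field_simp
    ring
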